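/- Let 𝒳 be a full additive subcategory of an abelian category 𝒜, let M be an object admitting a proper 𝒳-resolution, and let 0 → N → N' → N'' → 0 be a short exact sequence in 𝒜 that remains exact after applying Hom_𝒜(X, −) for every X ∈ 𝒳. Then there is a long exact sequence of relative Ext groups ⋯ → Ext^n_{𝒳𝒜}(M, N) → Ext^n_{𝒳𝒜}(M, N') → Ext^n_{𝒳𝒜}(M, N'') → Ext^{n+1}_{𝒳𝒜}(M, N) → ⋯ . -/

import Mathlib

open CategoryTheory Limits

universe w v u

variable {A : Type u} [Category.{v} A] [Abelian A]

/-- A complex `S` is `𝒳`-acyclic if `Hom_𝒜(X, S)` is acyclic for every `X ∈ 𝒳`. -/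
def XAcyclic (𝒳 : Set A) (S : CochainComplex A ℤ) : Prop :=
  ∀ X ∈ 𝒳, ∀ n : ℤ,
    ((((preadditiveCoyoneda.obj (Opposite.op X)).mapHomologicalComplex
      (ComplexShape.up ℤ)).obj S)).ExactAt n

/-- `𝒳`-quasi-isomorphisms of cochain complexes. -/
def XQuasiIso (𝒳 : Set A) {S T : CochainComplex A ℤ} (f : S ⟶ T) : Prop :=
  ∀ X ∈ 𝒳, QuasiIso (((preadditiveCoyoneda.obj (Opposite.op X)).mapHomologicalComplex
    (ComplexShape.up ℤ)).map f)

/-- The object `M` of `𝒜` viewed as a cochain complex concentrated in degree `k`. -/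
noncomputable abbrev singleCx (k : ℤ) (M : A) : CochainComplex A ℤ :=
  (HomologicalComplex.single A (ComplexShape.up ℤ) k).obj M

/-- The complex `Hom_𝒜(P, N)`, with `Hom_𝒜(P^{-n}, N)` in degree `n`; its `n`-th homology
is the relative cohomology group `Ext^n` when `P` is a proper resolution. -/
noncomputable def extComplex (P : CochainComplex A ℤ) (N : A) :
    CochainComplex AddCommGrpCat ℤ where
  X n := AddCommGrpCat.of (P.X (-n) ⟶ N)
  d i j := AddCommGrpCat.ofHom (AddMonoidHom.mk' (fun g => P.d (-j) (-i) ≫ g)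
    (fun g h => by simp [Preadditive.comp_add]))
  shape i j hij := by
    ext g
    have : P.d (-j) (-i) = 0 := P.shape _ _ (by simp only [ComplexShape.up_Rel] at hij ⊢; omega)
    simp [CategoryTheory.comp_apply, AddCommGrpCat.ofHom, this]
  d_comp_d' i j k _ _ := by
    ext g
    simp [CategoryTheory.comp_apply, AddCommGrpCat.ofHom]

/-- Functoriality of `Hom_𝒜(P, −)` in the second variable. -/
noncomputable def extComplexMap (P : CochainComplex A ℤ) {N N' : A} (f : N ⟶ N') :
    extComplex P N ⟶ extComplex P N' where
  f n := AddCommGrpCat.ofHom (AddMonoidHom.mk' (fun g => g ≫ f)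
    (fun g h => by simp [Preadditive.add_comp]))
  comm' i j _ := by
    ext g; simp [CategoryTheory.comp_apply, AddCommGrpCat.ofHom, extComplex]
    exact (Category.assoc _ _ _).symm

/-- Contravariant functoriality of `Hom_𝒜(−, N)` in the first variable. -/
noncomputable def extComplexMapLeft {P Q : CochainComplex A ℤ} (φ : P ⟶ Q) (N : A) :
    extComplex Q N ⟶ extComplex P N where
  f n := AddCommGrpCat.ofHom (AddMonoidHom.mk' (fun g => φ.f (-n) ≫ g)
    (fun g h => by simp [Preadditive.comp_add]))
  comm' i j _ := by
    ext g; simp [CategoryTheory.comp_apply, AddCommGrpCat.ofHom, extComplex]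
    exact (HomologicalComplex.Hom.comm_assoc φ (-j) (-i) g).symm

/-- `π : P ⟶ M` is a proper `𝒳`-resolution of `M`: `P` is concentrated in degrees `≤ 0` with
components in `𝒳`, and the augmented complex `⋯ → X^{-1} → X^0 → M → 0` becomes exact after
applying `Hom_𝒜(X, −)` for every `X ∈ 𝒳` (equivalently, `Hom_𝒜(X, π)` is a
quasi-isomorphism for every `X ∈ 𝒳`). -/
def IsProperRes (𝒳 : Set A) {M : A} (P : CochainComplex A ℤ) (π : P ⟶ singleCx 0 M) : Prop :=
  (∀ i : ℤ, i ≤ 0 → P.X i ∈ 𝒳) ∧ (∀ i : ℤ, 0 < i → IsZero (P.X i)) ∧ XQuasiIso 𝒳 π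

/-- `M` has finite `𝒳`-projective dimension: there is an exact sequence
`0 → X^{-n} → ⋯ → X^{-1} → X^0 → M → 0` with all `X^{-i} ∈ 𝒳`. -/
def FinXpd (𝒳 : Set A) (M : A) : Prop :=
  ∃ (n : ℕ) (P : CochainComplex A ℤ) (π : P ⟶ singleCx 0 M), QuasiIso π ∧
    (∀ i : ℤ, 0 < i → IsZero (P.X i)) ∧ (∀ i : ℤ, i < -(n : ℤ) → IsZero (P.X i)) ∧
    (∀ i : ℤ, -(n : ℤ) ≤ i → i ≤ 0 → P.X i ∈ 𝒳)

/-- `M` has `𝒳`-projective dimension at most `d`. -/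
def XpdLE (𝒳 : Set A) (M : A) (d : ℕ) : Prop :=
  ∃ (P : CochainComplex A ℤ) (π : P ⟶ singleCx 0 M), QuasiIso π ∧
    (∀ i : ℤ, 0 < i → IsZero (P.X i)) ∧ (∀ i : ℤ, i < -(d : ℤ) → IsZero (P.X i)) ∧
    (∀ i : ℤ, -(d : ℤ) ≤ i → i ≤ 0 → P.X i ∈ 𝒳)

/-- Proposition 4.5(1): for `M` with a proper `𝒳`-resolution `P` and an `𝒳`-acyclic short
exact sequence `0 → N → N' → N'' → 0` (one remaining exact after `Hom_𝒜(X, −)` for every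
`X ∈ 𝒳`), there are connecting homomorphisms making the induced long sequence of relative
cohomology groups `Ext^n_{𝒳𝒜}(M, −) = H^n(Hom_𝒜(P, −))` exact. -/
theorem stmt_12 (𝒳 : Set A) {M : A} (P : CochainComplex A ℤ) (π : P ⟶ singleCx 0 M)
    (hP : IsProperRes 𝒳 P π)
    {N N' N'' : A} (f : N ⟶ N') (g : N' ⟶ N'') (w : f ≫ g = 0)
    (hse : (ShortComplex.mk f g w).ShortExact)
    (hXexact : ∀ X ∈ 𝒳, Function.Surjective (fun h : X ⟶ N' => h ≫ g)) :
    ∃ ϑ : ∀ n : ℤ, ((extComplex P N'').homology n ⟶ (extComplex P N).homology (n + 1)),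
      ∀ n : ℤ,
        Function.Exact
          (HomologicalComplex.homologyMap (extComplexMap P f) n)
          (HomologicalComplex.homologyMap (extComplexMap P g) n) ∧
        Function.Exact
          (HomologicalComplex.homologyMap (extComplexMap P g) n) (ϑ n) ∧
        Function.Exact (ϑ n)
          (HomologicalComplex.homologyMap (extComplexMap P f) (n + 1)) := by
  have hmono : Mono f := hse.mono_f
  -- The short complex of cochain complexes of abelian groups
  set S : ShortComplex (CochainComplex AddCommGrpCat ℤ) :=
    ShortComplex.mk (extComplexMap P f) (extComplexMap P g) (by
      ext n h
      show (h ≫ f) ≫ g = 0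
      exact (Category.assoc (h : P.X (-n) ⟶ N) f g).trans ((congrArg (fun k => (h : P.X (-n) ⟶ N) ≫ k) w).trans (Limits.comp_zero (f := (h : P.X (-n) ⟶ N))))) with hSdef
  have hS : S.ShortExact := by
    apply HomologicalComplex.shortExact_of_degreewise_shortExact
    intro n
    have hcomp : ∀ (h : P.X (-n) ⟶ N),
        ((extComplexMap P f).f n) h = h ≫ f := fun _ => rfl
    have hcomp' : ∀ (h : P.X (-n) ⟶ N'),
        ((extComplexMap P g).f n) h = h ≫ g := fun _ => rfl
    have hm : Mono ((S.map (HomologicalComplex.eval AddCommGrpCat (ComplexShape.up ℤ) n)).f) := by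
      rw [AddCommGrpCat.mono_iff_injective]
      intro a b hab
      exact (cancel_mono f (g := (a : P.X (-n) ⟶ N)) (h := b)).1 hab
    have he : Epi ((S.map (HomologicalComplex.eval AddCommGrpCat (ComplexShape.up ℤ) n)).g) := by
      rw [AddCommGrpCat.epi_iff_surjective]
      intro y
      by_cases hn : (0:ℤ) ≤ n
      · obtain ⟨x, hx⟩ := hXexact (P.X (-n)) (hP.1 (-n) (by omega)) y
        exact ⟨x, hx⟩
      · have hz : IsZero (P.X (-n)) := hP.2.1 (-n) (by omega)
        refine ⟨0, ?_⟩
        show (0 : P.X (-n) ⟶ N') ≫ g = y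
        exact hz.eq_of_src _ _
    refine ShortComplex.ShortExact.mk (mono_f := hm) (epi_g := he) ?_
    rw [ShortComplex.ab_exact_iff]
    intro x₂ hx₂
    by_cases hn : (0:ℤ) ≤ n
    · have hx₂' : x₂ ≫ g = 0 := hx₂
      refine ⟨hse.exact.lift x₂ hx₂', ?_⟩
      exact hse.exact.lift_f x₂ hx₂'
    · have hz : IsZero (P.X (-n)) := hP.2.1 (-n) (by omega)
      refine ⟨0, ?_⟩
      show (0 : P.X (-n) ⟶ N) ≫ f = x₂
      exact hz.eq_of_src _ _
  refine ⟨fun n => hS.δ n (n+1) rfl, fun n => ?_⟩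
  refine ⟨?_, ?_, ?_⟩
  · exact (ShortComplex.ab_exact_iff_function_exact _).1 (hS.homology_exact₂ n)
  · exact (ShortComplex.ab_exact_iff_function_exact _).1 (hS.homology_exact₃ n (n+1) rfl)
  · exact (ShortComplex.ab_exact_iff_function_exact _).1 (hS.homology_exact₁ n (n+1) rfl)
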